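/- Let E be a countably infinite set, let G be a P-oligomorphic group of permutations of E, and let K be a subgroup of G of finite index. If r is the greatest G-invariant setoid on E all of whose equivalence classes are finite, then r is also the greatest K-invariant setoid on E all of whose equivalence classes are finite; that is, every K-invariant setoid on E with all classes finite is ≤ r in Setoid E. -/

import Mathlib

namespace BlockAux

variable {E : Type*} {u : E → E → Prop}

/-- reachability in at most `n` steps along `u`. -/
def reachIn (u : E → E → Prop) : ℕ → E → E → Prop
  | 0 => Eq
  | n+1 => fun x y => ∃ z, reachIn u n x z ∧ u z y

theorem reachIn_refl (hrefl : ∀ x, u x x) : ∀ n x, reachIn u n x x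
  | 0, _ => rfl
  | n+1, x => ⟨x, reachIn_refl hrefl n x, hrefl x⟩

theorem reachIn_succ_of (hrefl : ∀ x, u x x) {n x y} (h : reachIn u n x y) :
    reachIn u (n+1) x y := ⟨y, h, hrefl y⟩

theorem reachIn_le (hrefl : ∀ x, u x x) {m n x y} (hmn : m ≤ n)
    (h : reachIn u m x y) : reachIn u n x y := by
  induction hmn with
  | refl => exact h
  | step _ ih => exact reachIn_succ_of hrefl ih

theorem reachIn_trans {m x y} (h1 : reachIn u m x y) :
    ∀ {n z}, reachIn u n y z → reachIn u (m+n) x z := by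
  intro n
  induction n with
  | zero => intro z hz; exact hz ▸ h1
  | succ n ih =>
    rintro z ⟨w, hw, hwz⟩
    exact ⟨w, ih hw, hwz⟩

theorem reachIn_symm (hsymm : ∀ {x y}, u x y → u y x) :
    ∀ {n x y}, reachIn u n x y → reachIn u n y x := by
  intro n
  induction n with
  | zero => intro x y h; exact h.symm
  | succ n ih =>
    rintro x y ⟨z, hz, hzy⟩
    have h1 : reachIn u 1 y z := ⟨y, rfl, hsymm hzy⟩
    have := reachIn_trans h1 (ih hz)
    rwa [Nat.add_comm] at this

theorem reachIn_map (f : E → E) (hf : ∀ a b, u a b → u (f a) (f b)) :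
    ∀ {n x y}, reachIn u n x y → reachIn u n (f x) (f y) := by
  intro n
  induction n with
  | zero => intro x y h; exact congrArg f h
  | succ n ih =>
    rintro x y ⟨z, hz, hzy⟩
    exact ⟨f z, ih hz, hf _ _ hzy⟩

theorem reachIn_finite (hball : ∀ x : E, {y | u x y}.Finite) :
    ∀ (n : ℕ) (x : E), {y | reachIn u n x y}.Finite := by
  intro n
  induction n with
  | zero =>
    intro x
    have : {y | reachIn u 0 x y} = {x} := by
      ext y; simp [reachIn, eq_comm]
    rw [this]; exact Set.finite_singleton x
  | succ n ih =>
    intro x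
    have hsub : {y | reachIn u (n+1) x y} ⊆
        ⋃ z ∈ {z | reachIn u n x z}, {y | u z y} := by
      rintro y ⟨z, hz, hzy⟩
      exact Set.mem_biUnion hz hzy
    exact (Set.Finite.biUnion (ih x) fun z _ => hball z).subset hsub

theorem eqvGen_exists_reach (hsymm : ∀ {x y}, u x y → u y x)
    {x y : E} (h : Relation.EqvGen u x y) : ∃ n, reachIn u n x y := by
  induction h with
  | rel a b hab => exact ⟨1, a, rfl, hab⟩
  | refl a => exact ⟨0, rfl⟩
  | symm a b _ ih => exact ⟨ih.choose, reachIn_symm hsymm ih.choose_spec⟩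
  | trans a b c _ _ ih1 ih2 =>
    exact ⟨ih1.choose + ih2.choose, reachIn_trans ih1.choose_spec ih2.choose_spec⟩

theorem reachIn_stable (hrefl : ∀ x, u x x) {n : ℕ} {x : E}
    (hst : ∀ y, reachIn u (n+1) x y → reachIn u n x y) :
    ∀ m y, reachIn u m x y → reachIn u n x y := by
  intro m
  induction m with
  | zero => intro y h; exact h ▸ reachIn_refl hrefl n x
  | succ m ih =>
    rintro y ⟨z, hz, hzy⟩
    exact hst y ⟨z, ih z hz, hzy⟩

end BlockAux



/-- The orbit setoid of a permutation group `G ≤ Perm E` acting on the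
`n`-element finite subsets of `E`. -/
def permSetoid {E : Type*} (G : Subgroup (Equiv.Perm E)) (n : ℕ) :
    Setoid {s : Set E // s.Finite ∧ s.ncard = n} where
  r s t := ∃ g ∈ G, g '' s.1 = t.1
  iseqv := by
    constructor
    · exact fun s => ⟨1, G.one_mem, by simp⟩
    · rintro s t ⟨g, hg, h⟩
      refine ⟨g⁻¹, G.inv_mem hg, ?_⟩
      rw [← h, ← Set.image_comp]
      ext x; simp
    · rintro s t u ⟨g, hg, h⟩ ⟨g', hg', h'⟩
      refine ⟨g' * g, G.mul_mem hg' hg, ?_⟩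
      rw [← h', ← h, ← Set.image_comp]
      ext x; simp

/-- A setoid (equivalence relation) on `E` is `G`-invariant — i.e. a block
system for `G` — if its relation is preserved by every element of `G`. -/
def GInvariant {E : Type*} (G : Subgroup (Equiv.Perm E)) (r : Setoid E) : Prop :=
  ∀ g ∈ G, ∀ x y : E, r.r x y ↔ r.r (g x) (g y)

/-- The profile of a permutation group: the number of orbits of `n`-element
finite subsets. -/
noncomputable def profile {E : Type*} (G : Subgroup (Equiv.Perm E)) (n : ℕ) : ℕ :=
  Nat.card (Quotient (permSetoid G n))

/-- Let `G` be a P-oligomorphic group of permutations of a countably infinite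
set `E` and `K ≤ G` a subgroup of finite index. If `r` is the greatest
`G`-invariant setoid on `E` with all classes finite, then `r` is also the
greatest `K`-invariant setoid on `E` with all classes finite. -/
theorem greatest_finite_block_system_of_finite_index {E : Type*}
    [Countable E] [Infinite E]
    (G K : Subgroup (Equiv.Perm E)) (hKG : K ≤ G)
    (hindex : (K.subgroupOf G).index ≠ 0)
    (holig : ∀ n, Finite (Quotient (permSetoid G n)))
    (hpoly : ∃ c k : ℕ, ∀ n, profile G n ≤ c * (n + 1) ^ k)
    (r : Setoid E) (hrG : GInvariant G r)
    (hrfin : ∀ x : E, {y | r.r x y}.Finite)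
    (hrmax : ∀ s : Setoid E, GInvariant G s →
      (∀ x : E, {y | s.r x y}.Finite) → s ≤ r) :
    GInvariant K r ∧
      ∀ s : Setoid E, GInvariant K s →
        (∀ x : E, {y | s.r x y}.Finite) → s ≤ r := by
  classical
  refine ⟨fun g hg x y => hrG g (hKG hg) x y, ?_⟩
  intro s hsK hsfin
  set u : E → E → Prop := fun x y => ∃ g ∈ G, s.r (g x) (g y) with hu
  have urefl : ∀ x, u x x := fun x => ⟨1, G.one_mem, s.refl _⟩
  have usymm : ∀ {x y : E}, u x y → u y x := by
    rintro x y ⟨g, hg, h⟩; exact ⟨g, hg, s.symm h⟩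
  have uinv : ∀ g ∈ G, ∀ x y : E, u x y → u (g x) (g y) := by
    rintro g hg x y ⟨g', hg', h⟩
    refine ⟨g' * g⁻¹, G.mul_mem hg' (G.inv_mem hg), ?_⟩
    simpa [Equiv.Perm.mul_apply] using h
  haveI hfinQ : Finite (↥G ⧸ K.subgroupOf G) := by
    rw [Subgroup.index_eq_card] at hindex
    exact Nat.finite_of_card_ne_zero hindex
  have hball : ∀ x : E, {y | u x y}.Finite := by
    intro x
    have hsub : {y | u x y} ⊆ ⋃ c : ↥G ⧸ K.subgroupOf G,
        {y | s.r ((((Quotient.out c)⁻¹ : ↥G) : Equiv.Perm E) x)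
          ((((Quotient.out c)⁻¹ : ↥G) : Equiv.Perm E) y)} := by
      rintro y ⟨g, hg, h⟩
      set γ : ↥G := ⟨g, hg⟩ with hγ
      refine Set.mem_iUnion.mpr ⟨QuotientGroup.mk γ⁻¹, ?_⟩
      set b := Quotient.out (QuotientGroup.mk γ⁻¹ : ↥G ⧸ K.subgroupOf G) with hb
      have hbb : (QuotientGroup.mk b : ↥G ⧸ K.subgroupOf G) = QuotientGroup.mk γ⁻¹ :=
        Quotient.out_eq _
      have hmem : b⁻¹ * γ⁻¹ ∈ K.subgroupOf G := QuotientGroup.eq.mp hbb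
      have hK' : ((γ * b : ↥G) : Equiv.Perm E) ∈ K := by
        have h1 : (γ * b)⁻¹ ∈ K.subgroupOf G := by rw [mul_inv_rev]; exact hmem
        exact Subgroup.mem_subgroupOf.mp ((K.subgroupOf G).inv_mem_iff.mp h1)
      have keyc : ((γ * b : ↥G) : Equiv.Perm E) * ((b⁻¹ : ↥G) : Equiv.Perm E) = g := by
        have key : (γ * b) * b⁻¹ = γ := mul_inv_cancel_right γ b
        calc ((γ * b : ↥G) : Equiv.Perm E) * ((b⁻¹ : ↥G) : Equiv.Perm E)
            = (((γ * b) * b⁻¹ : ↥G) : Equiv.Perm E) := by push_cast; ring_nf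
          _ = g := by rw [key]
      have hxy : s.r (((γ * b : ↥G) : Equiv.Perm E) (((b⁻¹ : ↥G) : Equiv.Perm E) x))
          (((γ * b : ↥G) : Equiv.Perm E) (((b⁻¹ : ↥G) : Equiv.Perm E) y)) := by
        rw [← Equiv.Perm.mul_apply, ← Equiv.Perm.mul_apply, keyc]; exact h
      exact (hsK _ hK' _ _).mpr hxy
    refine Set.Finite.subset (Set.finite_iUnion fun c => ?_) hsub
    set a : Equiv.Perm E := (((Quotient.out c)⁻¹ : ↥G) : Equiv.Perm E) with ha
    have himg : {y | s.r (a x) (a y)} = ⇑a⁻¹ '' {z | s.r (a x) z} := by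
      ext y
      constructor
      · intro hy
        exact ⟨a y, hy, by simp⟩
      · rintro ⟨z, hz, rfl⟩
        simpa using hz
    rw [himg]
    exact (hsfin (a x)).image _
  set t : Setoid E := Relation.EqvGen.setoid u with hT
  have fwd : ∀ g ∈ G, ∀ x y, Relation.EqvGen u x y → Relation.EqvGen u (g x) (g y) := by
    intro g hg x y h
    induction h with
    | rel a b hab => exact Relation.EqvGen.rel _ _ (uinv g hg _ _ hab)
    | refl a => exact Relation.EqvGen.refl _
    | symm a b _ ih => exact Relation.EqvGen.symm _ _ ih
    | trans a b c _ _ ih1 ih2 => exact Relation.EqvGen.trans _ _ _ ih1 ih2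
  have htG : GInvariant G t := by
    intro g hg x y
    constructor
    · exact fwd g hg x y
    · intro h
      have := fwd g⁻¹ (G.inv_mem hg) _ _ h
      simp at this; exact this
  have htfin : ∀ x : E, {y | t.r x y}.Finite := by
    intro x₀
    by_contra hinf
    have hex : ∀ n : ℕ, ∃ y, BlockAux.reachIn u (n + 1) x₀ y ∧
        ¬ BlockAux.reachIn u n x₀ y := by
      intro n
      by_contra hno
      push_neg at hno
      apply hinf
      refine (BlockAux.reachIn_finite hball n x₀).subset ?_
      intro y hy
      obtain ⟨m, hm⟩ := BlockAux.eqvGen_exists_reach usymm hy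
      exact BlockAux.reachIn_stable urefl hno m y hm
    choose yf h1 h2 using hex
    have hne : ∀ n, x₀ ≠ yf n := fun n h =>
      h2 n (h ▸ BlockAux.reachIn_refl urefl n x₀)
    let F : ℕ → Quotient (permSetoid G 2) := fun n =>
      Quotient.mk _ ⟨{x₀, yf n}, Set.Finite.insert _ (Set.finite_singleton _),
        Set.ncard_pair (hne n)⟩
    have hFle : ∀ {n m : ℕ}, F n = F m → m ≤ n := by
      intro n m hF
      obtain ⟨g, hg, hgim⟩ := Quotient.exact hF
      have hgim' : ⇑g '' ({x₀, yf n} : Set E) = {x₀, yf m} := hgim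
      have himg : ({g x₀, g (yf n)} : Set E) = {x₀, yf m} := by
        rw [← hgim']; simp [Set.image_insert_eq]
      have hreach : BlockAux.reachIn u (n + 1) x₀ (yf m) := by
        have hmap := BlockAux.reachIn_map g (fun a b hab => uinv g hg a b hab) (h1 n)
        rcases Set.pair_eq_pair_iff.mp himg with ⟨hx, hy⟩ | ⟨hx, hy⟩
        · rwa [hx, hy] at hmap
        · rw [hx, hy] at hmap
          exact BlockAux.reachIn_symm usymm hmap
      by_contra hlt
      push_neg at hlt
      exact h2 m (BlockAux.reachIn_le urefl hlt hreach)
    have hFinj : Function.Injective F := fun n m h =>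
      le_antisymm (hFle h.symm) (hFle h)
    have := holig 2
    obtain ⟨n, m, hnm, he⟩ := Finite.exists_ne_map_eq_of_infinite F
    exact hnm (hFinj he)
  have htr : t ≤ r := hrmax t htG htfin
  have hst : s ≤ t := by
    rw [Setoid.le_def]
    intro x y hxy
    exact Relation.EqvGen.rel _ _ ⟨1, G.one_mem, by simpa using hxy⟩
  exact le_trans hst htr
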